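/- Quantum Bayesian Inference Theorem, forward direction: Let τ be a quantum state on ℂ^n ⊗ ℂ^m (a positive semidefinite trace-1 matrix indexed by Fin n × Fin m) with proj(τ) positive definite, and let p be a predicate (effect) on ℂ^n such that tr(τ * (p ⊗ 1)) ≠ 0 and tr(proj(τ) * pᵀ) ≠ 0. Then the second marginal of the lower conditioning of τ by p ⊗ 1 equals the state transformation along extr(τ) of the upper conditioning of proj(τ) by pᵀ: M₂(τ|_{p ⊗ 1}) = extr(τ) ≫ (proj(τ)|^{pᵀ}). Here p ⊗ 1 is the Kronecker product (p ⊗ 1) (i,k) (j,ℓ) := p i j * δ_{k ℓ}, and √(p ⊗ 1) = √p ⊗ 1. -/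

import Mathlib

open Matrix Kronecker
open scoped ComplexOrder

noncomputable section

/-- The positive semidefinite square root of a positive semidefinite matrix
(Mathlib's former `Matrix.PosSemidef.sqrt`, removed upstream). -/
def Matrix.PosSemidef.sqrt {n : Type*} [Fintype n] [DecidableEq n] {A : Matrix n n ℂ}
    (hA : A.PosSemidef) : Matrix n n ℂ :=
  hA.1.eigenvectorUnitary.1 * diagonal ((↑) ∘ (√·) ∘ hA.1.eigenvalues) *
  (star hA.1.eigenvectorUnitary : Matrix n n ℂ)

theorem Matrix.PosSemidef.sqrt_mul_self {n : Type*} [Fintype n] [DecidableEq n]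
    {A : Matrix n n ℂ} (hA : A.PosSemidef) : hA.sqrt * hA.sqrt = A := by
  have hU : (star hA.1.eigenvectorUnitary : Matrix n n ℂ) * hA.1.eigenvectorUnitary.1 = 1 :=
    Unitary.coe_star_mul_self _
  have hD : diagonal ((↑) ∘ (√·) ∘ hA.1.eigenvalues) * diagonal ((↑) ∘ (√·) ∘ hA.1.eigenvalues)
      = diagonal (((↑) : ℝ → ℂ) ∘ hA.1.eigenvalues) := by
    rw [diagonal_mul_diagonal]
    congr 1
    funext i
    simp only [Function.comp_apply]
    rw [← Complex.ofReal_mul, Real.mul_self_sqrt (hA.eigenvalues_nonneg i)]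
  conv_rhs => rw [hA.1.spectral_theorem]
  rw [Unitary.conjStarAlgAut_apply, Matrix.PosSemidef.sqrt]
  calc _ = hA.1.eigenvectorUnitary.1 * diagonal ((↑) ∘ (√·) ∘ hA.1.eigenvalues) *
        ((star hA.1.eigenvectorUnitary : Matrix n n ℂ) * hA.1.eigenvectorUnitary.1) *
        diagonal ((↑) ∘ (√·) ∘ hA.1.eigenvalues) *
        (star hA.1.eigenvectorUnitary : Matrix n n ℂ) := by simp only [Matrix.mul_assoc]
    _ = _ := by rw [hU, Matrix.mul_one, Matrix.mul_assoc _ (diagonal _) (diagonal _), hD]; rfl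

/-- Transpose of the first marginal of a joint quantum state. -/
def qproj {n m : ℕ} (τ : Matrix (Fin n × Fin m) (Fin n × Fin m) ℂ) :
    Matrix (Fin n) (Fin n) ℂ :=
  Matrix.of fun i j => ∑ k, τ (j, k) (i, k)

/-- Channel extracted from a joint quantum state. -/
def qextr {n m : ℕ} (τ : Matrix (Fin n × Fin m) (Fin n × Fin m) ℂ)
    (h : (qproj τ).PosDef) : Fin m → Fin m → Matrix (Fin n) (Fin n) ℂ :=
  fun k ℓ => ∑ i, ∑ j, (starRingEnd ℂ) (τ (i, k) (j, ℓ))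
    • ((h.posSemidef.sqrt)⁻¹ * Matrix.single i j 1 * (h.posSemidef.sqrt)⁻¹)

/-- Quantum Bayesian Inference Theorem, forward direction:
`M₂(τ|_{p ⊗ 1}) = extr(τ) ≫ (proj(τ)|^{pᵀ})`, where lower conditioning of `τ`
by `p ⊗ 1` uses `√(p ⊗ 1) = √p ⊗ 1`. -/
theorem quantum_bayesian_inference_forward {n m : ℕ}
    (τ : Matrix (Fin n × Fin m) (Fin n × Fin m) ℂ)
    (hτ : τ.PosSemidef) (hτtr : τ.trace = 1)
    (hproj : (qproj τ).PosDef)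
    (p : Matrix (Fin n) (Fin n) ℂ)
    (hp : p.PosSemidef) (hp1 : (1 - p).PosSemidef)
    (hv : (τ * (p ⊗ₖ (1 : Matrix (Fin m) (Fin m) ℂ))).trace ≠ 0)
    (hv' : (qproj τ * pᵀ).trace ≠ 0) :
    ∀ k ℓ : Fin m,
      (∑ i, (((τ * (p ⊗ₖ (1 : Matrix (Fin m) (Fin m) ℂ))).trace)⁻¹
          • ((hp.sqrt ⊗ₖ (1 : Matrix (Fin m) (Fin m) ℂ)) * τ
              * (hp.sqrt ⊗ₖ (1 : Matrix (Fin m) (Fin m) ℂ)))) (i, k) (i, ℓ))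
        = (qextr τ hproj ℓ k
            * (((qproj τ * pᵀ).trace)⁻¹
                • (hproj.posSemidef.sqrt * pᵀ * hproj.posSemidef.sqrt))).trace := by
  intro k ℓ
  set s := hproj.posSemidef.sqrt with hs
  -- invertibility of s
  have hss : s * s = qproj τ := hproj.posSemidef.sqrt_mul_self
  have hdet : s.det * s.det = (qproj τ).det := by rw [← Matrix.det_mul, hss]
  have hds : s.det ≠ 0 := by
    intro h
    rw [h, mul_zero] at hdet
    exact hproj.det_pos.ne' hdet.symm
  have h1 : s * s⁻¹ = 1 := Matrix.mul_nonsing_inv s hds.isUnit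
  have h2 : s⁻¹ * s = 1 := Matrix.nonsing_inv_mul s hds.isUnit
  -- trace equality
  have htr : (τ * (p ⊗ₖ (1 : Matrix (Fin m) (Fin m) ℂ))).trace = (qproj τ * pᵀ).trace := by
    simp only [Matrix.trace, Matrix.diag_apply, Matrix.mul_apply, Fintype.sum_prod_type,
      Matrix.kroneckerMap_apply, Matrix.one_apply, Matrix.transpose_apply, Matrix.of_apply,
      qproj, mul_ite, mul_one, mul_zero, Finset.sum_ite_eq', Finset.mem_univ, if_true,
      Finset.sum_mul]
    rw [show (∑ x : Fin n, ∑ x1 : Fin m, ∑ x2 : Fin n, τ (x, x1) (x2, x1) * p x2 x)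
        = ∑ x : Fin n, ∑ x2 : Fin n, ∑ x1 : Fin m, τ (x, x1) (x2, x1) * p x2 x from
      Finset.sum_congr rfl fun x _ => Finset.sum_comm]
    exact Finset.sum_comm
  -- key trace computation on RHS terms
  have key : ∀ i j : Fin n,
      ((s⁻¹ * Matrix.single i j 1 * s⁻¹) * (s * pᵀ * s)).trace = p i j := by
    intro i j
    have e1 : (s⁻¹ * Matrix.single i j 1 * s⁻¹) * (s * pᵀ * s)
        = s⁻¹ * (Matrix.single i j 1 * (pᵀ * s)) := by
      simp only [mul_assoc]
      rw [← mul_assoc s⁻¹ s, h2, one_mul]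
    rw [e1, Matrix.trace_mul_comm, mul_assoc, mul_assoc, h1, mul_one]
    simp [Matrix.trace, Matrix.mul_apply, Matrix.single, Matrix.diag_apply,
      ite_mul, one_mul, zero_mul, ite_and, Finset.sum_ite_eq, Finset.mem_univ]
  -- hermitian entries
  have herm : ∀ (i j : Fin n), τ (j, k) (i, ℓ) = (starRingEnd ℂ) (τ (i, ℓ) (j, k)) := by
    intro i j
    have := congrFun (congrFun hτ.1 (j, k)) (i, ℓ)
    rw [Matrix.conjTranspose_apply] at this
    exact this.symm
  -- compute RHS
  rw [htr]
  simp only [qextr, ← hs, Matrix.sum_mul, Matrix.trace_sum, Matrix.smul_mul,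
    Matrix.mul_smul, Matrix.trace_smul, smul_eq_mul]
  have hrhs : ∀ i j : Fin n,
      ((s⁻¹ * Matrix.single i j 1 * s⁻¹)
        * (((qproj τ * pᵀ).trace)⁻¹ • (s * pᵀ * s))).trace
      = ((qproj τ * pᵀ).trace)⁻¹ * p i j := by
    intro i j
    rw [Matrix.mul_smul, Matrix.trace_smul, key i j, smul_eq_mul]
  simp only [key, ← herm, Matrix.smul_apply, smul_eq_mul, ← Finset.mul_sum]
  congr 1
  simp only [Matrix.mul_apply, Fintype.sum_prod_type, Matrix.kroneckerMap_apply,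
    Matrix.one_apply, mul_ite, mul_one, mul_zero, ite_mul, zero_mul, one_mul,
    Finset.sum_ite_eq', Finset.sum_ite_eq, Finset.mem_univ, if_true]
  have hpp : ∀ a b : Fin n, ∑ x, hp.sqrt a x * hp.sqrt x b = p a b := fun a b => by
    rw [← Matrix.mul_apply, hp.sqrt_mul_self]
  simp only [Finset.sum_mul]
  rw [Finset.sum_comm]
  refine Finset.sum_congr rfl fun x1 _ => ?_
  rw [Finset.sum_comm]
  refine Finset.sum_congr rfl fun x2 _ => ?_
  rw [← hpp x1 x2, Finset.mul_sum]
  exact Finset.sum_congr rfl fun x _ => by ring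

end
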